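/- Type 2 explicitness theorem: let ⟨Q, g⟩ be a Type 2 policy for subject domain V (Q a partition of V, and for each W ∈ Q, g W a Type 1 policy ⟨P_W, f_W⟩ over W), S ∈ Sys(V), A an equivalence relation on T, o ∈ {U,L,EM,CA,WA}. For each W let R_{g W} = ⋀_{X∈P_W} f_W X (an equivalence relation on W) and R†_{g W} = R_{g W} ∪ All_{V\W}. If for every W ∈ Q, S_W = S ∩ T_W has subject domain W and satisfies g W (i.e., each block of P_W cut with S_W covers W and its K-space dominates in order o the corresponding f_W-partition), then ⟦≈_Q ∧ ⋀_{W∈Q} R†_{g W}⟧ ≤_o K(S, A). -/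

import Mathlib

open Set

section Defs

variable {α : Type*}

/-- A K-space over `W`: a collection of nonempty subsets of `W` covering `W`. -/
def Covers (K : Set (Set α)) (W : Set α) : Prop :=
  (∀ X ∈ K, X.Nonempty) ∧ ⋃₀ K = W

/-- A partition of `W`: a K-space whose members are pairwise disjoint. -/
def IsPart (K : Set (Set α)) (W : Set α) : Prop :=
  Covers K W ∧ ∀ X ∈ K, ∀ Y ∈ K, X ≠ Y → X ∩ Y = ∅

/-- Upper (Smyth) ordering. -/
def leU (K₁ K₂ : Set (Set α)) : Prop := ∀ X₂ ∈ K₂, ∃ X₁ ∈ K₁, X₁ ⊆ X₂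

/-- Lower (Hoare) ordering. -/
def leL (K₁ K₂ : Set (Set α)) : Prop := ∀ X₁ ∈ K₁, ∃ X₂ ∈ K₂, X₁ ⊆ X₂

/-- Egli-Milner ordering. -/
def leEM (K₁ K₂ : Set (Set α)) : Prop := leU K₁ K₂ ∧ leL K₁ K₂

/-- `P₁` refines `P₂`: every block of `P₁` is contained in some block of `P₂`. -/
def Refines (P₁ P₂ : Set (Set α)) : Prop := ∀ X₁ ∈ P₁, ∃ X₂ ∈ P₂, X₁ ⊆ X₂

/-- `X` answers query `Q` relative to universe `U`. -/
def Answers (U X Q : Set α) : Prop := X ⊆ Q ∨ X ⊆ U \ Q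

def CanAnswer (U : Set α) (K : Set (Set α)) (Q : Set α) : Prop := ∃ X ∈ K, Answers U X Q

def WillAnswer (U : Set α) (K : Set (Set α)) (Q : Set α) : Prop := ∀ X ∈ K, Answers U X Q

/-- Can-answer ordering relative to universe `U`. -/
def leCA (U : Set α) (K₁ K₂ : Set (Set α)) : Prop :=
  ∀ Q ⊆ U, CanAnswer U K₂ Q → CanAnswer U K₁ Q

/-- Will-answer ordering relative to universe `U`. -/
def leWA (U : Set α) (K₁ K₂ : Set (Set α)) : Prop :=
  ∀ Q ⊆ U, WillAnswer U K₂ Q → WillAnswer U K₁ Q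

/-- `K` can confirm fact `F`. -/
def CanConfirm (K : Set (Set α)) (F : Set α) : Prop := ∃ X ∈ K, X ⊆ F

/-- `K` can have uncertainty `F`. -/
def HasUncertainty (K : Set (Set α)) (F : Set α) : Prop := ∃ X ∈ K, F ⊆ X

/-- The observation (equivalence class of attacker `A`) containing trace `t`. -/
def obsClass {T : Type*} (A : Setoid T) (t : T) : Set T := {u | A.r u t}

/-- The K-space of attacker `A` for system `S` with subject function `Φ`:
knowledge sets `Φ(O ∩ S)` for observations `O` with `O ∩ S ≠ ∅`. -/
def kspace {T D : Type*} (Φ : T → D) (S : Set T) (A : Setoid T) : Set (Set D) :=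
  {X | ∃ t ∈ S, X = Φ '' (obsClass A t ∩ S)}

/-- `R` (a set of pairs) is an equivalence relation on the subset `V`. -/
def IsEROn (V : Set α) (R : Set (α × α)) : Prop :=
  R ⊆ V ×ˢ V ∧ (∀ v ∈ V, (v, v) ∈ R) ∧ (∀ x y, (x, y) ∈ R → (y, x) ∈ R) ∧
    (∀ x y z, (x, y) ∈ R → (y, z) ∈ R → (x, z) ∈ R)

/-- The equivalence class of `v` under the relation-as-set-of-pairs `R`. -/
def classOf (R : Set (α × α)) (v : α) : Set α := {u | (u, v) ∈ R}

/-- The partition `⟦R⟧` of `V` corresponding to an equivalence relation `R` on `V`. -/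
def classPart (V : Set α) (R : Set (α × α)) : Set (Set α) :=
  {C | ∃ v ∈ V, C = classOf R v}

end Defs

/-- Type 2 explicitness: if `S` satisfies the Type 2 policy `⟨Q, g⟩`
(with `g W = ⟨P W, f W⟩` a Type 1 policy over the block `W ∈ Q`) w.r.t. attacker `A`
and order `o ∈ {U, L, EM, CA, WA}`, then
`⟦≈_Q ∧ ⋀_{W∈Q} R†_{g W}⟧ ≤_o K(S, A)`, where `R_{g W} = ⋀_{X ∈ P W} f W X` and
`R†_{g W} = R_{g W} ∪ All_{V\W}`. -/
theorem stmt18 {T D : Type*} (Φ : T → D) (V : Set D) (A : Setoid T) (S : Set T)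
    (hS : S ⊆ Φ ⁻¹' V ∧ Φ '' S = V)
    (Q : Set (Set D)) (hQ : IsPart Q V) (hQne : Q.Nonempty)
    (P : Set D → Set (Set T)) (f : Set D → Set T → Set (D × D))
    (hP : ∀ W ∈ Q, IsPart (P W) (Φ ⁻¹' W) ∧ (P W).Nonempty ∧ ∀ X ∈ P W, Φ '' X = W)
    (hf : ∀ W ∈ Q, ∀ X ∈ P W, IsEROn W (f W X))
    (le : Set D → Set (Set D) → Set (Set D) → Prop)
    (hle : le ∈ ({fun _ => leU, fun _ => leL, fun _ => leEM, leCA, leWA} :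
      Set (Set D → Set (Set D) → Set (Set D) → Prop)))
    (hsat : ∀ W ∈ Q,
      (S ∩ Φ ⁻¹' W ⊆ Φ ⁻¹' W ∧ Φ '' (S ∩ Φ ⁻¹' W) = W) ∧
      ∀ X ∈ P W,
        (S ∩ Φ ⁻¹' W ∩ X ⊆ Φ ⁻¹' W ∧ Φ '' (S ∩ Φ ⁻¹' W ∩ X) = W) ∧
        le W (classPart W (f W X)) (kspace Φ (S ∩ Φ ⁻¹' W ∩ X) A)) :
    le V
      (classPart V ((⋃ W ∈ Q, W ×ˢ W) ∩
        ⋂ W ∈ Q, ((⋂ X ∈ P W, f W X) ∪ (V \ W) ×ˢ (V \ W))))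
      (kspace Φ S A) :=  by
  obtain ⟨hSV, hSim⟩ := hS
  set R : Set (D × D) := (⋃ W ∈ Q, W ×ˢ W) ∩
      ⋂ W ∈ Q, ((⋂ X ∈ P W, f W X) ∪ (V \ W) ×ˢ (V \ W)) with hRdef
  have hcover : ⋃₀ Q = V := hQ.1.2
  have hVW : ∀ W ∈ Q, W ⊆ V := fun W hW => hcover ▸ subset_sUnion_of_mem hW
  have blockEx : ∀ v ∈ V, ∃ W ∈ Q, v ∈ W := by
    intro v hv; rw [← hcover] at hv; exact hv
  have blockUniq : ∀ W ∈ Q, ∀ W' ∈ Q, ∀ v, v ∈ W → v ∈ W' → W = W' := by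
    intro W hW W' hW' v hv hv'
    by_contra hne
    have := hQ.2 W hW W' hW' hne
    exact absurd (show v ∈ W ∩ W' from ⟨hv, hv'⟩) (by rw [this]; exact notMem_empty v)
  -- key characterization of the classes of R
  have classEq : ∀ W ∈ Q, ∀ v ∈ W, classOf R v = ⋂ X ∈ P W, classOf (f W X) v := by
    intro W hW v hv
    obtain ⟨X₀, hX₀⟩ := (hP W hW).2.1
    ext u
    constructor
    · intro hu
      obtain ⟨h1, h2⟩ := hu
      have h2W := mem_iInter₂.mp h2 W hW
      rcases h2W with h | h
      · exact mem_iInter₂.mpr fun X hX =>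
          (mem_iInter₂.mp h X hX : (u, v) ∈ f W X)
      · exact absurd hv h.2.2
    · intro hu
      have hu' : ∀ X ∈ P W, (u, v) ∈ f W X := fun X hX => mem_iInter₂.mp hu X hX
      have huv : u ∈ W ∧ v ∈ W := by
        have := (hf W hW X₀ hX₀).1 (hu' X₀ hX₀)
        exact ⟨this.1, this.2⟩
      constructor
      · exact mem_iUnion₂.mpr ⟨W, hW, huv.1, huv.2⟩
      · refine mem_iInter₂.mpr fun W' hW' => ?_
        by_cases hWW' : W' = W
        · subst hWW'
          exact Or.inl (mem_iInter₂.mpr hu')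
        · refine Or.inr ⟨⟨hVW W hW huv.1, ?_⟩, ⟨hVW W hW huv.2, ?_⟩⟩
          · intro hc; exact hWW' (blockUniq W' hW' W hW u hc huv.1)
          · intro hc; exact hWW' (blockUniq W' hW' W hW v hc huv.2)
  have classMem : ∀ W ∈ Q, ∀ v ∈ W, classOf R v ∈ classPart V R :=
    fun W hW v hv => ⟨v, hVW W hW hv, rfl⟩
  have classSub : ∀ W ∈ Q, ∀ v ∈ W, ∀ X ∈ P W, classOf R v ⊆ classOf (f W X) v := by
    intro W hW v hv X hX
    rw [classEq W hW v hv]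
    exact biInter_subset_of_mem hX
  -- trace decomposition
  have traceBlock : ∀ t ∈ S, ∃ W ∈ Q, ∃ X ∈ P W, Φ t ∈ W ∧ t ∈ X := by
    intro t ht
    obtain ⟨W, hW, hΦt⟩ := blockEx (Φ t) (hSV ht)
    have htW : t ∈ Φ ⁻¹' W := hΦt
    rw [← (hP W hW).1.1.2] at htW
    obtain ⟨X, hX, htX⟩ := htW
    exact ⟨W, hW, X, hX, hΦt, htX⟩
  have kSub : ∀ (t : T) (W : Set D) (X : Set T),
      Φ '' (obsClass A t ∩ (S ∩ Φ ⁻¹' W ∩ X)) ⊆ Φ '' (obsClass A t ∩ S) := by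
    intro t W X
    exact image_mono (inter_subset_inter_right _ (fun u hu => hu.1.1))
  have kSubW : ∀ (t : T) (W : Set D) (X : Set T),
      Φ '' (obsClass A t ∩ (S ∩ Φ ⁻¹' W ∩ X)) ⊆ W := by
    rintro t W X y ⟨u, ⟨-, ⟨⟨-, hu⟩, -⟩⟩, rfl⟩
    exact hu
  -- answer transfer lemmas
  have ansShrink : ∀ (W : Set D), W ⊆ V → ∀ (Qr Y Y' : Set D), Y' ⊆ Y → Y' ⊆ W →
      Answers V Y Qr → Answers W Y' (Qr ∩ W) := by
    intro W hWV Qr Y Y' hYY hYW hA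
    rcases hA with h | h
    · exact Or.inl fun u hu => ⟨h (hYY hu), hYW hu⟩
    · exact Or.inr fun u hu => ⟨hYW hu, fun hc => (h (hYY hu)).2 hc.1⟩
  have ansLift : ∀ (W : Set D), W ⊆ V → ∀ (Qr C C' : Set D), C' ⊆ C →
      Answers W C (Qr ∩ W) → Answers V C' Qr := by
    intro W hWV Qr C C' hCC hA
    rcases hA with h | h
    · exact Or.inl fun u hu => (h (hCC hu)).1
    · refine Or.inr fun u hu => ?_
      have := h (hCC hu)
      exact ⟨hWV this.1, fun hc => this.2 ⟨hc, this.1⟩⟩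
  -- the five cases
  have caseU : (∀ W ∈ Q, ∀ X ∈ P W,
      leU (classPart W (f W X)) (kspace Φ (S ∩ Φ ⁻¹' W ∩ X) A)) →
      leU (classPart V R) (kspace Φ S A) := by
    intro hh
    rintro Y ⟨t, htS, rfl⟩
    obtain ⟨W, hW, X, hX, hΦt, htX⟩ := traceBlock t htS
    have ht' : t ∈ S ∩ Φ ⁻¹' W ∩ X := ⟨⟨htS, hΦt⟩, htX⟩
    have hU := hh W hW X hX
    obtain ⟨C, ⟨v, hvW, rfl⟩, hCY⟩ := hU _ ⟨t, ht', rfl⟩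
    exact ⟨classOf R v, classMem W hW v hvW,
      fun u hu => kSub t W X (hCY (classSub W hW v hvW X hX hu))⟩
  have caseL : (∀ W ∈ Q, ∀ X ∈ P W,
      leL (classPart W (f W X)) (kspace Φ (S ∩ Φ ⁻¹' W ∩ X) A)) →
      leL (classPart V R) (kspace Φ S A) := by
    intro hh
    rintro C ⟨v, hvV, rfl⟩
    obtain ⟨W, hW, hvW⟩ := blockEx v hvV
    obtain ⟨X, hX⟩ := (hP W hW).2.1
    have hL := hh W hW X hX
    obtain ⟨Y', ⟨t, ht', rfl⟩, hCY⟩ := hL _ ⟨v, hvW, rfl⟩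
    refine ⟨Φ '' (obsClass A t ∩ S), ⟨t, ht'.1.1, rfl⟩, ?_⟩
    exact fun u hu => kSub t W X (hCY (classSub W hW v hvW X hX hu))
  have caseCA : (∀ W ∈ Q, ∀ X ∈ P W,
      leCA W (classPart W (f W X)) (kspace Φ (S ∩ Φ ⁻¹' W ∩ X) A)) →
      leCA V (classPart V R) (kspace Φ S A) := by
    intro hh
    rintro Qr hQr ⟨Y, ⟨t, htS, rfl⟩, hAns⟩
    obtain ⟨W, hW, X, hX, hΦt, htX⟩ := traceBlock t htS
    have ht' : t ∈ S ∩ Φ ⁻¹' W ∩ X := ⟨⟨htS, hΦt⟩, htX⟩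
    have hCA := hh W hW X hX
    have hcan : CanAnswer W (kspace Φ (S ∩ Φ ⁻¹' W ∩ X) A) (Qr ∩ W) :=
      ⟨_, ⟨t, ht', rfl⟩, ansShrink W (hVW W hW) Qr _ _ (kSub t W X) (kSubW t W X) hAns⟩
    obtain ⟨C, ⟨v, hvW, rfl⟩, hCans⟩ := hCA (Qr ∩ W) inter_subset_right hcan
    exact ⟨classOf R v, classMem W hW v hvW,
      ansLift W (hVW W hW) Qr _ _ (classSub W hW v hvW X hX) hCans⟩
  have caseWA : (∀ W ∈ Q, ∀ X ∈ P W,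
      leWA W (classPart W (f W X)) (kspace Φ (S ∩ Φ ⁻¹' W ∩ X) A)) →
      leWA V (classPart V R) (kspace Φ S A) := by
    intro hh
    rintro Qr hQr hWill C ⟨v, hvV, rfl⟩
    obtain ⟨W, hW, hvW⟩ := blockEx v hvV
    obtain ⟨X, hX⟩ := (hP W hW).2.1
    have hWA := hh W hW X hX
    have hwill : WillAnswer W (kspace Φ (S ∩ Φ ⁻¹' W ∩ X) A) (Qr ∩ W) := by
      rintro Y' ⟨t, ht', rfl⟩
      exact ansShrink W (hVW W hW) Qr _ _ (kSub t W X) (kSubW t W X)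
        (hWill _ ⟨t, ht'.1.1, rfl⟩)
    have := hWA (Qr ∩ W) inter_subset_right hwill _ ⟨v, hvW, rfl⟩
    exact ansLift W (hVW W hW) Qr _ _ (classSub W hW v hvW X hX) this
  simp only [Set.mem_insert_iff, Set.mem_singleton_iff] at hle
  rcases hle with rfl | rfl | rfl | rfl | rfl
  · exact caseU fun W hW X hX => ((hsat W hW).2 X hX).2
  · exact caseL fun W hW X hX => ((hsat W hW).2 X hX).2
  · exact ⟨caseU fun W hW X hX => (((hsat W hW).2 X hX).2).1,
      caseL fun W hW X hX => (((hsat W hW).2 X hX).2).2⟩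
  · exact caseCA fun W hW X hX => ((hsat W hW).2 X hX).2
  · exact caseWA fun W hW X hX => ((hsat W hW).2 X hX).2
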